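/- Let f : [a,b] → ℝ be continuous on [a,b] and twice differentiable on (a,b) with |f''(t)| ≤ M for all t ∈ (a,b). Then for every x ∈ [a,b], |f(x) - ((f(b)-f(a))/(b-a))·(x - (a+b)/2) - (1/(b-a))·∫_a^b f(t) dt| ≤ (M/2)·{ [((x-(a+b)/2)²/(b-a)² + 1/4)]² + 1/12 }·(b-a)². -/

import Mathlib

set_option maxHeartbeats 1000000

open Set MeasureTheory intervalIntegral

theorem dragomir_barnett
    (a b : ℝ) (hab : a < b) (f f' f'' : ℝ → ℝ) (M : ℝ)
    (hf : ContinuousOn f (Set.Icc a b))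
    (hf' : ∀ t ∈ Set.Ioo a b, HasDerivAt f (f' t) t)
    (hf'' : ∀ t ∈ Set.Ioo a b, HasDerivAt f' (f'' t) t)
    (hM : ∀ t ∈ Set.Ioo a b, |f'' t| ≤ M) :
    ∀ x ∈ Set.Icc a b,
      |f x - (f b - f a) / (b - a) * (x - (a + b) / 2)
          - (1 / (b - a)) * ∫ t in a..b, f t|
        ≤ M / 2 * (((x - (a + b) / 2) ^ 2 / (b - a) ^ 2 + 1 / 4) ^ 2 + 1 / 12)
            * (b - a) ^ 2 := by
  intro x hx
  have h0 : (0:ℝ) < b - a := sub_pos.mpr hab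
  have hax : a ≤ x := hx.1
  have hxb : x ≤ b := hx.2
  have hmid : (a + b) / 2 ∈ Ioo a b := ⟨by linarith, by linarith⟩
  have hM0 : 0 ≤ M := le_trans (abs_nonneg _) (hM _ hmid)
  set L : ℝ := (f b - f a) / (b - a) with hL
  -- Lipschitz bound for f'
  have hlip : ∀ s ∈ Ioo a b, ∀ t ∈ Ioo a b, |f' t - f' s| ≤ M * |t - s| := by
    intro s hs t ht
    have := (convex_Ioo a b).norm_image_sub_le_of_norm_hasDerivWithin_le
      (f' := f'') (fun u hu => (hf'' u hu).hasDerivWithinAt)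
      (fun u hu => by simpa [Real.norm_eq_abs] using hM u hu) hs ht
    simpa [Real.norm_eq_abs] using this
  -- f' is continuous on Ioo
  have hf'c : ContinuousOn f' (Ioo a b) := fun t ht =>
    ((hf'' t ht).continuousAt).continuousWithinAt
  -- f' is bounded, hence interval integrable
  have hbd : ∀ t ∈ Ioo a b, |f' t| ≤ |f' ((a+b)/2)| + M * (b - a) := by
    intro t ht
    have h1 := hlip _ hmid t ht
    have h2 : |t - (a+b)/2| ≤ b - a := by
      rw [abs_le]; constructor <;> [skip; skip] <;>
        · rcases ht with ⟨h3, h4⟩; linarith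
    have := abs_sub_abs_le_abs_sub (f' t) (f' ((a+b)/2))
    nlinarith [abs_nonneg (t - (a+b)/2)]
  have hint : IntervalIntegrable f' volume a b := by
    rw [intervalIntegrable_iff, uIoc_of_le hab.le, integrableOn_Ioc_iff_integrableOn_Ioo]
    refine Integrable.mono' (g := fun _ => |f' ((a+b)/2)| + M * (b - a))
      (integrableOn_const measure_Ioo_lt_top.ne) ?_ ?_
    · exact hf'c.aestronglyMeasurable measurableSet_Ioo
    · exact (ae_restrict_iff' measurableSet_Ioo).2 (Filter.Eventually.of_forall fun t ht => by
        simpa [Real.norm_eq_abs] using hbd t ht)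
  have hfint : IntervalIntegrable f volume a b := by
    apply ContinuousOn.intervalIntegrable
    rwa [uIcc_of_le hab.le]
  -- FTC on [a,b] for f
  have hF : ∫ t in a..b, f' t = f b - f a :=
    integral_eq_sub_of_hasDeriv_right_of_le hab.le hf
      (fun t ht => (hf' t ht).hasDerivWithinAt) hint
  -- FTC for (t-a)*f t on [a,x]
  have hcont1 : ContinuousOn (fun t => (t - a) * f t) (Icc a x) :=
    (continuousOn_id.sub continuousOn_const).mul (hf.mono (Icc_subset_Icc le_rfl hxb))
  have hint1 : IntervalIntegrable (fun t => f t + (t - a) * f' t) volume a x := by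
    refine IntervalIntegrable.add (hfint.mono_set ?_) ?_
    · rw [uIcc_of_le hax, uIcc_of_le hab.le]; exact Icc_subset_Icc le_rfl hxb
    · have hsub : uIcc a x ⊆ uIcc a b := by
        rw [uIcc_of_le hax, uIcc_of_le hab.le]; exact Icc_subset_Icc le_rfl hxb
      have := (hint.mono_set hsub).continuousOn_mul (g := fun t => t - a)
        (by fun_prop)
      simpa using this
  have hA : ∫ t in a..x, (f t + (t - a) * f' t) = (x - a) * f x := by
    have := integral_eq_sub_of_hasDeriv_right_of_le hax hcont1
      (fun t ht => by
        have ht' : t ∈ Ioo a b := ⟨ht.1, lt_of_lt_of_le ht.2 hxb⟩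
        have : HasDerivAt (fun t => (t - a) * f t) (1 * f t + (t - a) * f' t) t :=
          ((hasDerivAt_id t).sub_const a).mul (hf' t ht')
        simpa using this.hasDerivWithinAt) hint1
    rw [this]; ring
  -- FTC for (t-b)*f t on [x,b]
  have hcont2 : ContinuousOn (fun t => (t - b) * f t) (Icc x b) :=
    (continuousOn_id.sub continuousOn_const).mul (hf.mono (Icc_subset_Icc hax le_rfl))
  have hint2 : IntervalIntegrable (fun t => f t + (t - b) * f' t) volume x b := by
    refine IntervalIntegrable.add (hfint.mono_set ?_) ?_
    · rw [uIcc_of_le hxb, uIcc_of_le hab.le]; exact Icc_subset_Icc hax le_rfl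
    · have hsub : uIcc x b ⊆ uIcc a b := by
        rw [uIcc_of_le hxb, uIcc_of_le hab.le]; exact Icc_subset_Icc hax le_rfl
      have := (hint.mono_set hsub).continuousOn_mul (g := fun t => t - b)
        (by fun_prop)
      simpa using this
  have hB : ∫ t in x..b, (f t + (t - b) * f' t) = (b - x) * f x := by
    have := integral_eq_sub_of_hasDeriv_right_of_le hxb hcont2
      (fun t ht => by
        have ht' : t ∈ Ioo a b := ⟨lt_of_le_of_lt hax ht.1, ht.2⟩
        have : HasDerivAt (fun t => (t - b) * f t) (1 * f t + (t - b) * f' t) t :=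
          ((hasDerivAt_id t).sub_const b).mul (hf' t ht')
        simpa using this.hasDerivWithinAt) hint2
    rw [this]; ring
  -- hoisted subset facts
  have hsub1 : uIcc a x ⊆ uIcc a b := by
    rw [uIcc_of_le hax, uIcc_of_le hab.le]; exact Icc_subset_Icc le_rfl hxb
  have hsub2 : uIcc x b ⊆ uIcc a b := by
    rw [uIcc_of_le hxb, uIcc_of_le hab.le]; exact Icc_subset_Icc hax le_rfl
  have hfiA : IntervalIntegrable f volume a x := hfint.mono_set hsub1
  have hfiB : IntervalIntegrable f volume x b := hfint.mono_set hsub2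
  have hkiA : IntervalIntegrable (fun t => (t - a) * f' t) volume a x := by
    have := (hint.mono_set hsub1).continuousOn_mul (g := fun t => t - a) (by fun_prop)
    simpa using this
  have hkiB : IntervalIntegrable (fun t => (t - b) * f' t) volume x b := by
    have := (hint.mono_set hsub2).continuousOn_mul (g := fun t => t - b) (by fun_prop)
    simpa using this
  have hker1 : IntervalIntegrable (fun t => (t - a) * (f' t - L)) volume a x := by
    have := ((hint.mono_set hsub1).sub (_root_.intervalIntegrable_const (c := L))).continuousOn_mul
      (g := fun t => t - a) (by fun_prop)
    simpa using this
  have hker2 : IntervalIntegrable (fun t => (t - b) * (f' t - L)) volume x b := by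
    have := ((hint.mono_set hsub2).sub (_root_.intervalIntegrable_const (c := L))).continuousOn_mul
      (g := fun t => t - b) (by fun_prop)
    simpa using this
  -- linearity consequences
  have hPA : ∫ t in a..x, (t - a) * f' t = (x - a) * f x - ∫ t in a..x, f t := by
    have h1 := intervalIntegral.integral_add hfiA hkiA
    rw [hA] at h1
    linarith
  have hPB : ∫ t in x..b, (t - b) * f' t = (b - x) * f x - ∫ t in x..b, f t := by
    have h1 := intervalIntegral.integral_add hfiB hkiB
    rw [hB] at h1
    linarith
  have hKA : ∫ t in a..x, (t - a) = (x - a) ^ 2 / 2 := by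
    rw [intervalIntegral.integral_sub intervalIntegrable_id intervalIntegrable_const, integral_id,
      intervalIntegral.integral_const, smul_eq_mul]
    ring
  have hKB : ∫ t in x..b, (t - b) = -((b - x) ^ 2 / 2) := by
    rw [intervalIntegral.integral_sub intervalIntegrable_id intervalIntegrable_const, integral_id,
      intervalIntegral.integral_const, smul_eq_mul]
    ring
  have hQA : ∫ t in a..x, (t - a) * (f' t - L)
      = (x - a) * f x - (∫ t in a..x, f t) - (x - a) ^ 2 / 2 * L := by
    rw [intervalIntegral.integral_congr (g := fun t => (t - a) * f' t - (t - a) * L) (fun t _ => by ring),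
      intervalIntegral.integral_sub hkiA (by apply Continuous.intervalIntegrable; fun_prop),
      intervalIntegral.integral_mul_const, hKA, hPA]
  have hQB : ∫ t in x..b, (t - b) * (f' t - L)
      = (b - x) * f x - (∫ t in x..b, f t) + (b - x) ^ 2 / 2 * L := by
    rw [intervalIntegral.integral_congr (g := fun t => (t - b) * f' t - (t - b) * L) (fun t _ => by ring),
      intervalIntegral.integral_sub hkiB (by apply Continuous.intervalIntegrable; fun_prop),
      intervalIntegral.integral_mul_const, hKB, hPB]
    ring
  have hsplit : (∫ t in a..x, f t) + ∫ t in x..b, f t = ∫ t in a..b, f t :=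
    intervalIntegral.integral_add_adjacent_intervals hfiA hfiB
  -- the Montgomery-type identity
  have hident : (b - a) * (f x - L * (x - (a + b) / 2) - (1 / (b - a)) * ∫ t in a..b, f t)
      = (∫ t in a..x, (t - a) * (f' t - L)) + ∫ t in x..b, (t - b) * (f' t - L) := by
    rw [hQA, hQB, ← hsplit]
    field_simp
    ring
  -- pointwise bound on |f' t - L|
  have hkey : ∀ t ∈ Ioo a b, |f' t - L| ≤ M * ((t - a) ^ 2 + (b - t) ^ 2) / (2 * (b - a)) := by
    intro t ht
    have hrep : (b - a) * (f' t - L) = ∫ s in a..b, (f' t - f' s) := by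
      rw [intervalIntegral.integral_sub intervalIntegrable_const hint, hF, intervalIntegral.integral_const, smul_eq_mul, hL]
      field_simp
    have habs1 : ∫ s in a..t, M * (t - s) = M * ((t - a) ^ 2 / 2) := by
      rw [intervalIntegral.integral_const_mul]
      rw [show (∫ s in a..t, (t - s)) = (t - a) ^ 2 / 2 by
        rw [intervalIntegral.integral_sub intervalIntegrable_const intervalIntegrable_id, integral_id,
          intervalIntegral.integral_const, smul_eq_mul]; ring]
    have habs2 : ∫ s in t..b, M * (s - t) = M * ((b - t) ^ 2 / 2) := by
      rw [intervalIntegral.integral_const_mul]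
      rw [show (∫ s in t..b, (s - t)) = (b - t) ^ 2 / 2 by
        rw [intervalIntegral.integral_sub intervalIntegrable_id intervalIntegrable_const, integral_id,
          intervalIntegral.integral_const, smul_eq_mul]; ring]
    have habs : ∫ s in a..b, M * |t - s| = M * ((t - a) ^ 2 + (b - t) ^ 2) / 2 := by
      rw [← intervalIntegral.integral_add_adjacent_intervals (b := t)
        (by apply Continuous.intervalIntegrable; fun_prop)
        (by apply Continuous.intervalIntegrable; fun_prop)]
      rw [intervalIntegral.integral_congr (a := a) (b := t) (g := fun s => M * (t - s)) (fun s hs => by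
        rw [uIcc_of_le ht.1.le] at hs
        rw [abs_of_nonneg (by linarith [hs.2] : (0:ℝ) ≤ t - s)])]
      rw [intervalIntegral.integral_congr (a := t) (b := b) (g := fun s => M * (s - t)) (fun s hs => by
        rw [uIcc_of_le ht.2.le] at hs
        rw [abs_of_nonpos (by linarith [hs.1] : t - s ≤ 0), neg_sub])]
      rw [habs1, habs2]
      ring
    have hmono : |∫ s in a..b, (f' t - f' s)| ≤ ∫ s in a..b, M * |t - s| := by
      refine le_trans (by simpa only [Real.norm_eq_abs] using
        intervalIntegral.norm_integral_le_integral_norm (f := fun s => f' t - f' s) (μ := volume) hab.le) ?_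
      refine intervalIntegral.integral_mono_ae_restrict hab.le
        ((intervalIntegrable_const.sub hint).abs) (by apply Continuous.intervalIntegrable; fun_prop) ?_
      rw [← Measure.restrict_congr_set Ioo_ae_eq_Icc]
      refine (ae_restrict_iff' measurableSet_Ioo).2 (Filter.Eventually.of_forall fun s hs => ?_)
      simpa [Real.norm_eq_abs, abs_sub_comm] using hlip s hs t ht
    have h1 : |(b - a) * (f' t - L)| ≤ M * ((t - a) ^ 2 + (b - t) ^ 2) / 2 := by
      rw [hrep]; rw [habs] at hmono; linarith
    rw [abs_mul, abs_of_pos h0] at h1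
    rw [le_div_iff₀ (by positivity)]
    nlinarith
  -- polynomial antiderivatives
  have hpoly1 : ∀ c d : ℝ, ∫ t in c..d, (t - a) * ((t - a) ^ 2 + (b - t) ^ 2)
      = ((d - a) ^ 4 / 4 - (b - a) * (b - d) ^ 3 / 3 + (b - d) ^ 4 / 4)
        - ((c - a) ^ 4 / 4 - (b - a) * (b - c) ^ 3 / 3 + (b - c) ^ 4 / 4) := by
    intro c d
    refine integral_eq_sub_of_hasDerivAt
      (f := fun t => (t - a) ^ 4 / 4 - (b - a) * (b - t) ^ 3 / 3 + (b - t) ^ 4 / 4)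
      (fun t _ => ?_) (by apply Continuous.intervalIntegrable; fun_prop)
    have h1 := (((hasDerivAt_id t).sub_const a).pow (n := 4)).div_const 4
    have h2 := ((((hasDerivAt_id t).const_sub b).pow (n := 3)).const_mul (b - a)).div_const 3
    have h3 := (((hasDerivAt_id t).const_sub b).pow (n := 4)).div_const 4
    convert (h1.sub h2).add h3 using 1
    · funext y; simp only [id_eq, Pi.pow_apply, Pi.add_apply, Pi.sub_apply]
    simp only [id_eq]
    norm_num
    ring
  have hpoly2 : ∀ c d : ℝ, ∫ t in c..d, (b - t) * ((t - a) ^ 2 + (b - t) ^ 2)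
      = (-(b - d) ^ 4 / 4 + (b - a) * (d - a) ^ 3 / 3 - (d - a) ^ 4 / 4)
        - (-(b - c) ^ 4 / 4 + (b - a) * (c - a) ^ 3 / 3 - (c - a) ^ 4 / 4) := by
    intro c d
    refine integral_eq_sub_of_hasDerivAt
      (f := fun t => -(b - t) ^ 4 / 4 + (b - a) * (t - a) ^ 3 / 3 - (t - a) ^ 4 / 4)
      (fun t _ => ?_) (by apply Continuous.intervalIntegrable; fun_prop)
    have h1 := ((((hasDerivAt_id t).const_sub b).pow (n := 4)).div_const 4).neg
    have h2 := ((((hasDerivAt_id t).sub_const a).pow (n := 3)).const_mul (b - a)).div_const 3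
    have h3 := (((hasDerivAt_id t).sub_const a).pow (n := 4)).div_const 4
    convert (h1.add h2).sub h3 using 1
    · funext y; simp only [id_eq, Pi.pow_apply, Pi.neg_apply, Pi.add_apply, Pi.sub_apply]; ring
    · simp only [id_eq]
      norm_num
      ring
  -- bound the two kernel integrals
  have hbnd1 : |∫ t in a..x, (t - a) * (f' t - L)|
      ≤ M / (2 * (b - a)) * ∫ t in a..x, (t - a) * ((t - a) ^ 2 + (b - t) ^ 2) := by
    rw [← intervalIntegral.integral_const_mul]
    refine le_trans (by simpa only [Real.norm_eq_abs] using
      intervalIntegral.norm_integral_le_integral_norm (f := fun t => (t - a) * (f' t - L)) (μ := volume) hax) ?_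
    refine intervalIntegral.integral_mono_ae_restrict hax hker1.abs
      (by apply Continuous.intervalIntegrable; fun_prop) ?_
    rw [← Measure.restrict_congr_set Ioo_ae_eq_Icc]
    refine (ae_restrict_iff' measurableSet_Ioo).2 (Filter.Eventually.of_forall fun t ht => ?_)
    have ht' : t ∈ Ioo a b := ⟨ht.1, lt_of_lt_of_le ht.2 hxb⟩
    have hk := hkey t ht'
    have h1 : (0:ℝ) ≤ t - a := by linarith [ht.1]
    simp only [Real.norm_eq_abs]
    rw [abs_mul, abs_of_nonneg h1]
    calc (t - a) * |f' t - L| ≤ (t - a) * (M * ((t - a) ^ 2 + (b - t) ^ 2) / (2 * (b - a))) := by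
          exact mul_le_mul_of_nonneg_left hk h1
      _ = M / (2 * (b - a)) * ((t - a) * ((t - a) ^ 2 + (b - t) ^ 2)) := by ring
  have hbnd2 : |∫ t in x..b, (t - b) * (f' t - L)|
      ≤ M / (2 * (b - a)) * ∫ t in x..b, (b - t) * ((t - a) ^ 2 + (b - t) ^ 2) := by
    rw [← intervalIntegral.integral_const_mul]
    refine le_trans (by simpa only [Real.norm_eq_abs] using
      intervalIntegral.norm_integral_le_integral_norm (f := fun t => (t - b) * (f' t - L)) (μ := volume) hxb) ?_
    refine intervalIntegral.integral_mono_ae_restrict hxb hker2.abs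
      (by apply Continuous.intervalIntegrable; fun_prop) ?_
    rw [← Measure.restrict_congr_set Ioo_ae_eq_Icc]
    refine (ae_restrict_iff' measurableSet_Ioo).2 (Filter.Eventually.of_forall fun t ht => ?_)
    have ht' : t ∈ Ioo a b := ⟨lt_of_le_of_lt hax ht.1, ht.2⟩
    have hk := hkey t ht'
    have h1 : (0:ℝ) ≤ b - t := by linarith [ht.2]
    simp only [Real.norm_eq_abs]
    rw [abs_mul, abs_of_nonpos (by linarith [ht.2] : t - b ≤ 0)]
    calc -(t - b) * |f' t - L| ≤ (b - t) * (M * ((t - a) ^ 2 + (b - t) ^ 2) / (2 * (b - a))) := by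
          rw [neg_sub]; exact mul_le_mul_of_nonneg_left hk h1
      _ = M / (2 * (b - a)) * ((b - t) * ((t - a) ^ 2 + (b - t) ^ 2)) := by ring
  -- put everything together
  set E := f x - L * (x - (a + b) / 2) - (1 / (b - a)) * ∫ t in a..b, f t with hE
  have htot : (b - a) * |E| ≤ M / (2 * (b - a))
      * ((∫ t in a..x, (t - a) * ((t - a) ^ 2 + (b - t) ^ 2))
        + ∫ t in x..b, (b - t) * ((t - a) ^ 2 + (b - t) ^ 2)) := by
    have h1 : |(b - a) * E| ≤ M / (2 * (b - a)) * (∫ t in a..x, (t - a) * ((t - a) ^ 2 + (b - t) ^ 2))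
        + M / (2 * (b - a)) * ∫ t in x..b, (b - t) * ((t - a) ^ 2 + (b - t) ^ 2) := by
      rw [hident]
      exact le_trans (abs_add_le _ _) (add_le_add hbnd1 hbnd2)
    rw [abs_mul, abs_of_pos h0] at h1
    linarith
  rw [hpoly1 a x, hpoly2 x b] at htot
  have hgoal : (b - a) * (M / 2 * (((x - (a + b) / 2) ^ 2 / (b - a) ^ 2 + 1 / 4) ^ 2 + 1 / 12)
      * (b - a) ^ 2)
      = M / (2 * (b - a)) * ((((x - a) ^ 4 / 4 - (b - a) * (b - x) ^ 3 / 3 + (b - x) ^ 4 / 4)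
          - ((a - a) ^ 4 / 4 - (b - a) * (b - a) ^ 3 / 3 + (b - a) ^ 4 / 4))
        + ((-(b - b) ^ 4 / 4 + (b - a) * (b - a) ^ 3 / 3 - (b - a) ^ 4 / 4)
          - (-(b - x) ^ 4 / 4 + (b - a) * (x - a) ^ 3 / 3 - (x - a) ^ 4 / 4))) := by
    field_simp
    ring
  rw [← hgoal] at htot
  exact le_of_mul_le_mul_left htot h0
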